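/- Let T be a light tournament, let X_1, …, X_ℓ be a C₃-chain in T, and let w be a vertex of T not belonging to any X_i. (1) If w ⇒ X_i for some i, then w ⇒ X_j for all j with i ≤ j ≤ ℓ. (2) If X_i ⇒ w for some i, then X_j ⇒ w for all j with 1 ≤ j ≤ i. -/
import Mathlib


/-- A tournament on a vertex type `V`: for every two distinct vertices exactly one
of the two possible arcs is present, and there are no loops. -/
structure Tournament (V : Type) where
  arc : V → V → Prop
  asymm : ∀ u v, arc u v → ¬ arc v u
  total : ∀ u v, u ≠ v → arc u v ∨ arc v u

namespace Tournament

variable {V : Type}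

/-- A set of vertices is transitive (acyclic) if it contains no directed triangle. -/
def IsTransitiveSet (T : Tournament V) (S : Set V) : Prop :=
  ∀ a ∈ S, ∀ b ∈ S, ∀ c ∈ S, ¬ (T.arc a b ∧ T.arc b c ∧ T.arc c a)

/-- Out-neighborhood `N⁺(v)`. -/
def outN (T : Tournament V) (v : V) : Set V := {w | T.arc v w}

/-- In-neighborhood `N⁻(v)`. -/
def inN (T : Tournament V) (v : V) : Set V := {w | T.arc w v}

/-- Arc neighborhood `N(uv)` of an arc `u → v`: vertices forming a directed
triangle with the arc. -/
def arcNbhd (T : Tournament V) (u v : V) : Set V := {w | T.arc v w ∧ T.arc w u}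

/-- `T.ColorableOn S k` means the induced subtournament `T[S]` can be partitioned
into at most `k` transitive sets. -/
def ColorableOn (T : Tournament V) (S : Set V) (k : ℕ) : Prop :=
  ∃ f : V → ℕ, (∀ v ∈ S, f v < k) ∧ ∀ i : ℕ, T.IsTransitiveSet {v | v ∈ S ∧ f v = i}

/-- The dichromatic number of `T`: the least `k` such that `V(T)` can be
partitioned into `k` transitive sets. -/
noncomputable def dichromaticNumber (T : Tournament V) : ℕ :=
  sInf {k | T.ColorableOn Set.univ k}

/-- An arc `u → v` is heavy if `N(uv)` contains a directed triangle. -/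
def IsHeavy (T : Tournament V) (u v : V) : Prop :=
  T.arc u v ∧ ∃ a b c,
    a ∈ T.arcNbhd u v ∧ b ∈ T.arcNbhd u v ∧ c ∈ T.arcNbhd u v ∧
    T.arc a b ∧ T.arc b c ∧ T.arc c a

/-- A tournament is light if it has no heavy arc. -/
def IsLight (T : Tournament V) : Prop := ∀ u v, ¬ T.IsHeavy u v

/-- The induced subtournament `T[S]` is light: for every arc within `S`, the part
of its arc neighborhood inside `S` is transitive. -/
def LightOn (T : Tournament V) (S : Set V) : Prop :=
  ∀ u ∈ S, ∀ v ∈ S, T.arc u v → T.IsTransitiveSet (T.arcNbhd u v ∩ S)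

/-- `S` is the vertex set of a directed triangle. -/
def IsTriangle (T : Tournament V) (S : Set V) : Prop :=
  ∃ a b c, S = {a, b, c} ∧ T.arc a b ∧ T.arc b c ∧ T.arc c a

/-- `S ⇒ U`: every arc between `S` and `U` is directed from `S` to `U`. -/
def Beats (T : Tournament V) (S U : Set V) : Prop :=
  ∀ s ∈ S, ∀ u ∈ U, T.arc s u

/-- `X 0, …, X (L-1)` is a `C₃`-chain of length `L`: pairwise vertex-disjoint
directed triangles with `X i ⇒ X (i+1)`. -/
def IsC3Chain (T : Tournament V) (X : ℕ → Set V) (L : ℕ) : Prop :=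
  (∀ i < L, T.IsTriangle (X i)) ∧
  (∀ i < L, ∀ j < L, i ≠ j → Disjoint (X i) (X j)) ∧
  (∀ i, i + 1 < L → T.Beats (X i) (X (i + 1)))

/-- `v 0, …, v k` are the vertices of a shortest directed path from `v 0` to `v k`:
consecutive arcs are present, and no directed path (walk) from `v 0` to `v k`
has fewer than `k` arcs. -/
def IsShortestPath (T : Tournament V) (v : ℕ → V) (k : ℕ) : Prop :=
  (∀ i < k, T.arc (v i) (v (i + 1))) ∧
  (∀ m : ℕ, ∀ p : ℕ → V, p 0 = v 0 → p m = v k →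
    (∀ i < m, T.arc (p i) (p (i + 1))) → k ≤ m)

/-- The path decomposition `D 0, …, D (k+1)` associated to the path `v 0, …, v k`:
`D 0 = N⁺(v 0)`, `D i = N(e i) \ (D 0 ∪ ⋯ ∪ D (i-1))` for `1 ≤ i ≤ k` where
`e i` is the arc `v (i-1) → v i`, and `D (k+1) = N⁻(v k) \ (D 0 ∪ ⋯ ∪ D k)`. -/
def PathDecomp (T : Tournament V) (v : ℕ → V) (k : ℕ) (D : ℕ → Set V) : Prop :=
  D 0 = T.outN (v 0) ∧
  (∀ i, 1 ≤ i → i ≤ k → D i = T.arcNbhd (v (i - 1)) (v i) \ ⋃ j < i, D j) ∧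
  D (k + 1) = T.inN (v k) \ ⋃ j < k + 1, D j

end Tournament

theorem stmt_13 {V : Type} [Fintype V] (T : Tournament V) (hlight : T.IsLight)
    (L : ℕ) (X : ℕ → Set V) (hchain : T.IsC3Chain X L)
    (w : V) (hw : ∀ i < L, w ∉ X i) :
    ((∀ i < L, (∀ x ∈ X i, T.arc w x) →
        ∀ j, i ≤ j → j < L → ∀ x ∈ X j, T.arc w x) ∧
     (∀ i < L, (∀ x ∈ X i, T.arc x w) →
        ∀ j ≤ i, ∀ x ∈ X j, T.arc x w)) := by
  obtain ⟨htri, hdisj, hbeats⟩ := hchain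
  -- forward step
  have step1 : ∀ i, i + 1 < L → (∀ x ∈ X i, T.arc w x) → ∀ x ∈ X (i + 1), T.arc w x := by
    intro i hi hwi x hx
    have hxw : x ≠ w := fun h => hw (i + 1) hi (h ▸ hx)
    rcases T.total w x (Ne.symm hxw) with h | h
    · exact h
    · exfalso
      obtain ⟨a, b, c, hS, hab, hbc, hca⟩ := htri i (Nat.lt_of_succ_lt hi)
      have ha : a ∈ X i := hS ▸ Or.inl rfl
      have hb : b ∈ X i := hS ▸ Or.inr (Or.inl rfl)
      have hc : c ∈ X i := hS ▸ Or.inr (Or.inr rfl)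
      have mem : ∀ y ∈ X i, y ∈ T.arcNbhd x w :=
        fun y hy => ⟨hwi y hy, hbeats i hi y hy x hx⟩
      exact hlight x w ⟨h, a, b, c, mem a ha, mem b hb, mem c hc, hab, hbc, hca⟩
  -- backward step
  have step2 : ∀ i, i + 1 < L → (∀ x ∈ X (i + 1), T.arc x w) → ∀ x ∈ X i, T.arc x w := by
    intro i hi hwi x hx
    have hxw : x ≠ w := fun h => hw i (Nat.lt_of_succ_lt hi) (h ▸ hx)
    rcases T.total x w hxw with h | h
    · exact h
    · exfalso
      obtain ⟨a, b, c, hS, hab, hbc, hca⟩ := htri (i + 1) hi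
      have ha : a ∈ X (i + 1) := hS ▸ Or.inl rfl
      have hb : b ∈ X (i + 1) := hS ▸ Or.inr (Or.inl rfl)
      have hc : c ∈ X (i + 1) := hS ▸ Or.inr (Or.inr rfl)
      have mem : ∀ y ∈ X (i + 1), y ∈ T.arcNbhd w x :=
        fun y hy => ⟨hbeats i hi x hx y hy, hwi y hy⟩
      exact hlight w x ⟨h, a, b, c, mem a ha, mem b hb, mem c hc, hab, hbc, hca⟩
  constructor
  · intro i hi hwi j hij hjL
    induction j with
    | zero =>
      have : i = 0 := Nat.le_zero.mp hij
      exact this ▸ hwi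
    | succ n ih =>
      rcases Nat.lt_or_ge i (n + 1) with h | h
      · exact step1 n hjL (ih (Nat.lt_succ_iff.mp h) (Nat.lt_of_succ_lt hjL))
      · have : i = n + 1 := Nat.le_antisymm hij h
        exact this ▸ hwi
  · intro i hi hwi j hij
    -- prove by downward induction: if X i ⇒ w then X j ⇒ w for j ≤ i
    have key : ∀ d, ∀ j, j + d = i → ∀ x ∈ X j, T.arc x w := by
      intro d
      induction d with
      | zero => intro j hj; exact (by omega : j = i) ▸ hwi
      | succ n ih =>
        intro j hj
        exact step2 j (by omega) (ih (j + 1) (by omega))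
    exact key (i - j) j (by omega)
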